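/- Let μ be a Λ-bounded premeasure and F a Λ-Carleson set with complementary arcs {Iₙ} (|I₁| ≥ |I₂| ≥ ⋯). Then the Λ-singular part μ_s(F) := −Σₙ μ(Iₙ) is well-defined (the series converges) and μ_s(F) ≤ 0. -/

import Mathlib

open MeasureTheory Filter Metric Set
open scoped Topology ENNReal

noncomputable section

instance : Fact ((0:ℝ) < 1) := ⟨one_pos⟩

/-- The circle of circumference 1. -/
abbrev Circle1 := AddCircle (1 : ℝ)

/-- Arcs (possibly half-open, possibly empty) of the circle. -/
def IsArc (S : Set Circle1) : Prop :=
  ∃ a l : ℝ, 0 ≤ l ∧ l ≤ 1 ∧ S = (fun x : ℝ => (x : Circle1)) '' Set.Ico a (a + l)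

/-- Normalized length of a subset of the circle. -/
def arcLen (S : Set Circle1) : ℝ := (volume S).toReal

/-- A premeasure on the circle: finitely additive on arcs, total mass zero,
continuous on nested sequences of arcs with empty intersection. -/
structure Premeasure where
  m : Set Circle1 → ℝ
  empty : m ∅ = 0
  total : m Set.univ = 0
  union : ∀ S T : Set Circle1, Disjoint S T → IsArc T → m (S ∪ T) = m S + m T
  cont : ∀ I : ℕ → Set Circle1, (∀ n, IsArc (I n)) → (∀ n, I (n + 1) ⊆ I n) →
    (⋂ n, I n) = ∅ → Tendsto (fun n => m (I n)) atTop (𝓝 0)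

/-- `μ(I) ≤ C |I| Λ(|I|)` for every arc `I`. -/
def LambdaBounded (Λ : ℝ → ℝ) (μ : Premeasure) (C : ℝ) : Prop :=
  ∀ S : Set Circle1, IsArc S → μ.m S ≤ C * arcLen S * Λ (arcLen S)

/-- Majorant hypotheses on `Λ`. -/
def Majorant (Λ : ℝ → ℝ) : Prop :=
  (∀ t ∈ Set.Ioc (0:ℝ) 1, 0 < Λ t) ∧ AntitoneOn Λ (Set.Ioc 0 1) ∧
  MonotoneOn (fun t => t * Λ t) (Set.Ioc 0 1) ∧
  Tendsto (fun t => t * Λ t) (𝓝[>] 0) (𝓝 0) ∧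
  Tendsto Λ (𝓝[>] 0) atTop

theorem coe_eq_coe' (x y : ℝ) : (x : Circle1) = (y : Circle1) ↔ ∃ z : ℤ, y = x + z := by
  rw [QuotientAddGroup.eq_iff_sub_mem]
  constructor
  · rintro h
    obtain ⟨z, hz⟩ := AddSubgroup.mem_zmultiples_iff.mp h
    simp only [zsmul_eq_mul, mul_one] at hz
    exact ⟨-z, by push_cast; linarith⟩
  · rintro ⟨z, rfl⟩
    refine AddSubgroup.mem_zmultiples_iff.mpr ⟨-z, by simp [zsmul_eq_mul]⟩
theorem arc_eq_preimage (a l : ℝ) (hl : l ≤ 1) :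
    (fun x : ℝ => (x : Circle1)) '' Set.Ico a (a + l)
      = (AddCircle.measurableEquivIco 1 a) ⁻¹' (Subtype.val ⁻¹' Ico a (a + l)) := by
  ext y
  simp only [mem_image, mem_preimage]
  constructor
  · rintro ⟨x, hx, rfl⟩
    have hx' : x ∈ Ico a (a + 1) := ⟨hx.1, lt_of_lt_of_le hx.2 (by linarith)⟩
    have : (AddCircle.equivIco 1 a) x = ⟨x, hx'⟩ := by
      rw [Equiv.apply_eq_iff_eq_symm_apply]; rfl
    show ((AddCircle.equivIco 1 a) (x : Circle1) : ℝ) ∈ Ico a (a + l)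
    rw [this]; exact hx
  · intro h
    refine ⟨(AddCircle.equivIco 1 a y : ℝ), h, ?_⟩
    exact (AddCircle.equivIco 1 a).symm_apply_apply y

theorem arc_measurable (a l : ℝ) (hl : l ≤ 1) :
    MeasurableSet ((fun x : ℝ => (x : Circle1)) '' Set.Ico a (a + l)) := by
  rw [arc_eq_preimage a l hl]
  exact (AddCircle.measurableEquivIco 1 a).measurable
    (measurable_subtype_coe measurableSet_Ico)

theorem arc_volume (a l : ℝ) (h0 : 0 ≤ l) (hl : l ≤ 1) :
    volume ((fun x : ℝ => (x : Circle1)) '' Set.Ico a (a + l)) = ENNReal.ofReal l := by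
  set U := (fun x : ℝ => (x : Circle1)) '' Set.Ico a (a + l) with hU
  have hmeas : MeasurableSet U := arc_measurable a l hl
  have key := AddCircle.add_projection_respects_measure (T := 1) a hmeas
  have hsub1 : Ioo a (a + l) ⊆ QuotientAddGroup.mk ⁻¹' U ∩ Ioc a (a + 1) := by
    intro x hx
    refine ⟨⟨x, ⟨hx.1.le, hx.2⟩, rfl⟩, hx.1, by linarith [hx.2]⟩
  have hsub2 : QuotientAddGroup.mk ⁻¹' U ∩ Ioc a (a + 1) ⊆ Ioc a (a + l) ∪ {a + 1} := by
    rintro x ⟨hx1, hx2⟩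
    obtain ⟨y, hy, hxy⟩ := hx1
    obtain ⟨z, hz⟩ := (coe_eq_coe' y x).mp hxy
    have h1 : (-1 : ℝ) < (z : ℝ) := by
      have : (z:ℝ) = x - y := by linarith [hz]
      rw [this]; cases hy; cases hx2; linarith
    have h2 : (z : ℝ) ≤ 1 := by
      have : (z:ℝ) = x - y := by linarith [hz]
      rw [this]; cases hy; cases hx2; linarith
    have h1' : (-1 : ℤ) < z := by exact_mod_cast h1
    have h2' : z ≤ (1 : ℤ) := by exact_mod_cast h2
    interval_cases z
    · left; push_cast at hz; cases hy; cases hx2; constructor <;> linarith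
    · right; push_cast at hz; cases hy; cases hx2
      have : x = a + 1 := by linarith
      simp [this]
  refine le_antisymm ?_ ?_
  · calc volume U = volume (QuotientAddGroup.mk ⁻¹' U ∩ Ioc a (a + 1)) := key
      _ ≤ volume (Ioc a (a + l) ∪ {a + 1}) := measure_mono hsub2
      _ ≤ volume (Ioc a (a + l)) + volume ({a + 1} : Set ℝ) := measure_union_le _ _
      _ = ENNReal.ofReal l := by simp [Real.volume_Ioc]
  · calc ENNReal.ofReal l = volume (Ioo a (a + l)) := by simp [Real.volume_Ioo]
      _ ≤ volume (QuotientAddGroup.mk ⁻¹' U ∩ Ioc a (a + 1)) := measure_mono hsub1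
      _ = volume U := key.symm
theorem isArc_empty : IsArc ∅ :=
  ⟨0, 0, le_refl 0, zero_le_one, by simp⟩

theorem isArc_univ : IsArc univ :=
  ⟨0, 1, zero_le_one, le_refl 1, by rw [AddCircle.coe_image_Ico_eq]⟩

theorem coe_injOn (a : ℝ) : InjOn (fun x : ℝ => (x : Circle1)) (Ico a (a + 1)) :=
  fun _ hx _ hy h => (AddCircle.coe_eq_coe_iff_of_mem_Ico hx hy).mp h

/-- the image of a subinterval can be lifted into the base interval -/
theorem arc_lift {a l c m : ℝ} (hl0 : 0 ≤ l) (hl : l < 1) (hm : 0 < m)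
    (h : (fun x : ℝ => (x : Circle1)) '' Set.Ico c (c + m)
        ⊆ (fun x : ℝ => (x : Circle1)) '' Set.Ico a (a + l)) :
    ∃ c' : ℝ, (c' : Circle1) = (c : Circle1) ∧ a ≤ c' ∧ c' < a + l ∧ c' + m ≤ a + l := by
  obtain ⟨c', hc'mem, hc'⟩ : ∃ c' ∈ Ico a (a + l), (c' : Circle1) = (c : Circle1) :=
    h ⟨c, ⟨le_refl c, by linarith⟩, rfl⟩
  refine ⟨c', hc', hc'mem.1, hc'mem.2, ?_⟩
  by_contra hcon
  push_neg at hcon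
  set t := (a + l + min (a + 1) (c' + m)) / 2 with ht
  have htl : a + l < t := by
    have h1 : a + l < min (a + 1) (c' + m) := lt_min (by linarith) hcon
    simp only [ht]; linarith
  have ht1 : t < a + 1 := by
    have := min_le_left (a + 1) (c' + m); simp only [ht]; linarith
  have htm : t < c' + m := by
    have := min_le_right (a + 1) (c' + m); simp only [ht]; linarith
  have htc : c' ≤ t := le_trans hc'mem.2.le htl.le
  -- t is in the image of Ico c (c+m)
  obtain ⟨z, hz⟩ := (coe_eq_coe' c c').mp hc'.symm
  have htmem : (t : Circle1) ∈ (fun x : ℝ => (x : Circle1)) '' Set.Ico c (c + m) := by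
    refine ⟨t - z, ⟨by linarith [hz], by linarith [hz]⟩, ?_⟩
    exact ((coe_eq_coe' (t - z) t).mpr ⟨z, by ring⟩)
  obtain ⟨s, hs, hst⟩ := h htmem
  obtain ⟨w, hw⟩ := (coe_eq_coe' s t).mp hst
  have hw0 : (0 : ℝ) < w := by
    have : s < a + l := hs.2
    have : (w:ℝ) = t - s := by linarith [hw]
    rw [this]; linarith [hs.2]
  have hw1 : (w : ℝ) < 1 := by
    have : (w:ℝ) = t - s := by linarith [hw]
    rw [this]; linarith [hs.1]
  have : (0 : ℤ) < w := by exact_mod_cast hw0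
  have : w < (1 : ℤ) := by exact_mod_cast hw1
  omega
theorem coe_image_shift (c m : ℝ) (z : ℤ) :
    (fun x : ℝ => (x : Circle1)) '' Set.Ico (c + z) (c + z + m)
      = (fun x : ℝ => (x : Circle1)) '' Set.Ico c (c + m) := by
  ext y
  constructor
  · rintro ⟨x, hx, rfl⟩
    exact ⟨x - z, ⟨by linarith [hx.1], by linarith [hx.2]⟩,
      ((coe_eq_coe' (x:ℝ) (x - z : ℝ)).mpr ⟨-z, by push_cast; ring⟩).symm⟩
  · rintro ⟨x, hx, rfl⟩
    exact ⟨x + z, ⟨by linarith [hx.1], by linarith [hx.2]⟩,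
      ((coe_eq_coe' (x:ℝ) (x + z : ℝ)).mpr ⟨z, by ring⟩).symm⟩

theorem Ico_diff_Ico (a l b m : ℝ) (h1 : a ≤ b) (h2 : b + m ≤ a + l) (hm : 0 ≤ m) :
    Ico a (a + l) \ Ico b (b + m) = Ico a b ∪ Ico (b + m) (a + l) := by
  ext x
  simp only [mem_diff, mem_Ico, mem_union, not_and, not_lt]
  constructor
  · rintro ⟨⟨hx1, hx2⟩, hx3⟩
    by_cases hxb : x < b
    · exact Or.inl ⟨hx1, hxb⟩
    · push_neg at hxb; exact Or.inr ⟨hx3 hxb, hx2⟩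
  · rintro (⟨hx1, hx2⟩ | ⟨hx1, hx2⟩)
    · exact ⟨⟨hx1, by linarith⟩, fun h => by linarith⟩
    · exact ⟨⟨by linarith, hx2⟩, fun h => by linarith⟩

/-- Arc splitting: removing a subarc from an arc leaves two arcs, and any arc inside `J`
disjoint from `B` lies in one of the two pieces. -/
theorem arc_split (J B : Set Circle1) (hJ : IsArc J) (hB : IsArc B) (hBJ : B ⊆ J) :
    ∃ A₁ A₂ : Set Circle1, IsArc A₁ ∧ IsArc A₂ ∧ Disjoint A₁ A₂ ∧ A₁ ∪ A₂ = J \ B ∧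
      ∀ A, IsArc A → A ⊆ J → Disjoint A B → (A ⊆ A₁ ∨ A ⊆ A₂) := by
  obtain ⟨a, l, hl0, hl1, rfl⟩ := hJ
  obtain ⟨b, m, hm0, hm1, rfl⟩ := hB
  rcases eq_or_lt_of_le hm0 with hm | hm
  · -- B is empty
    have hBe : (fun x : ℝ => (x : Circle1)) '' Set.Ico b (b + m) = ∅ := by
      rw [← hm]; simp
    refine ⟨_, ∅, ⟨a, l, hl0, hl1, rfl⟩, isArc_empty, disjoint_empty _, by rw [hBe]; simp, ?_⟩
    intro A _ hAJ _; exact Or.inl (by simpa using hAJ)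
  rcases eq_or_lt_of_le hl1 with hl | hl
  · -- J is the whole circle
    have hJu : (fun x : ℝ => (x : Circle1)) '' Set.Ico a (a + l) = univ := by
      rw [hl]; exact AddCircle.coe_image_Ico_eq (1:ℝ) a
    set B := (fun x : ℝ => (x : Circle1)) '' Set.Ico b (b + m) with hBdef
    set R := (fun x : ℝ => (x : Circle1)) '' Set.Ico (b + m) ((b + m) + (1 - m)) with hR
    have hsplit : Ico b (b + 1) = Ico b (b + m) ∪ Ico (b + m) ((b + m) + (1 - m)) := by
      rw [Ico_union_Ico_eq_Ico (by linarith) (by linarith)]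
      norm_num
    have hcover : B ∪ R = univ := by
      rw [hBdef, hR, ← image_union, ← hsplit, AddCircle.coe_image_Ico_eq (1:ℝ) b]
    have hdisjBR : Disjoint B R := by
      refine Disjoint.image ?_ (coe_injOn b) (fun x hx => ⟨hx.1, by linarith [hx.2]⟩)
        (fun x hx => ⟨by linarith [hx.1], by linarith [hx.2]⟩)
      refine Set.disjoint_left.mpr fun x hx1 hx2 => ?_
      linarith [hx1.2, hx2.1]
    have hRcompl : R = Bᶜ := by
      ext x
      constructor
      · intro hx
        exact fun hxB => Set.disjoint_left.mp hdisjBR hxB hx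
      · intro hx
        rcases (hcover.symm ▸ Set.mem_univ x : x ∈ B ∪ R) with h | h
        · exact absurd h hx
        · exact h
    refine ⟨R, ∅, ⟨b + m, 1 - m, by linarith, by linarith, rfl⟩, isArc_empty,
      disjoint_empty _, ?_, ?_⟩
    · rw [union_empty, hRcompl, hJu]
      ext x; simp
    · intro A _ _ hAB
      left
      rw [hRcompl]
      exact Set.subset_compl_iff_disjoint_right.mpr hAB
  · -- l < 1
    obtain ⟨b', hb'c, hab', hb'l, hb'm⟩ := arc_lift hl0 hl hm hBJ
    obtain ⟨z, hz⟩ := (coe_eq_coe' b b').mp hb'c.symm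
    have hBeq : (fun x : ℝ => (x : Circle1)) '' Set.Ico b (b + m)
        = (fun x : ℝ => (x : Circle1)) '' Set.Ico b' (b' + m) := by
      rw [hz, ← coe_image_shift b m z]
    have hsubJ : Ico a (a + l) ⊆ Ico a (a + 1) := Ico_subset_Ico_right (by linarith)
    have hinj := (coe_injOn a).mono hsubJ
    have hsub1 : Ico a b' ⊆ Ico a (a + l) := Ico_subset_Ico_right (by linarith)
    have hsub2 : Ico (b' + m) (a + l) ⊆ Ico a (a + l) := Ico_subset_Ico_left (by linarith)
    have hsubB : Ico b' (b' + m) ⊆ Ico a (a + l) := fun x hx => ⟨by linarith [hx.1], by linarith [hx.2]⟩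
    refine ⟨(fun x : ℝ => (x : Circle1)) '' Ico a b',
      (fun x : ℝ => (x : Circle1)) '' Ico (b' + m) (a + l),
      ⟨a, b' - a, by linarith, by linarith, by rw [show a + (b' - a) = b' by ring]⟩,
      ⟨b' + m, a + l - (b' + m), by linarith, by linarith,
        by rw [show b' + m + (a + l - (b' + m)) = a + l by ring]⟩, ?_, ?_, ?_⟩
    · refine Disjoint.image ?_ hinj hsub1 hsub2
      refine Set.disjoint_left.mpr fun x hx1 hx2 => ?_
      exact absurd (hx2.1.trans_lt hx1.2) (by simp; linarith)
    · rw [hBeq, ← image_union, ← Ico_diff_Ico a l b' m hab' hb'm hm0]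
      exact hinj.image_diff_subset hsubB
    · intro A hA hAJ hAB
      obtain ⟨c, p, hp0, hp1, rfl⟩ := hA
      rcases eq_or_lt_of_le hp0 with hp | hp
      · left; rw [← hp]; simp
      obtain ⟨c', hc'c, hac', hc'l, hc'p⟩ := arc_lift hl0 hl hp hAJ
      obtain ⟨w, hw⟩ := (coe_eq_coe' c c').mp hc'c.symm
      have hAeq : (fun x : ℝ => (x : Circle1)) '' Set.Ico c (c + p)
          = (fun x : ℝ => (x : Circle1)) '' Set.Ico c' (c' + p) := by
        rw [hw, ← coe_image_shift c p w]
      rw [hAeq]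
      have hreal : Ico c' (c' + p) ∩ Ico b' (b' + m) = ∅ := by
        rw [eq_empty_iff_forall_notMem]
        rintro x ⟨hx1, hx2⟩
        have hxA : (x : Circle1) ∈ (fun x : ℝ => (x : Circle1)) '' Set.Ico c (c + p) := by
          rw [hAeq]; exact ⟨x, hx1, rfl⟩
        have hxB : (x : Circle1) ∈ (fun x : ℝ => (x : Circle1)) '' Set.Ico b (b + m) := by
          rw [hBeq]; exact ⟨x, hx2, rfl⟩
        exact Set.disjoint_left.mp hAB hxA hxB
      have hcases : c' + p ≤ b' ∨ b' + m ≤ c' := by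
        by_contra hcon
        push_neg at hcon
        have hx : max c' b' ∈ Ico c' (c' + p) ∩ Ico b' (b' + m) :=
          ⟨⟨le_max_left _ _, max_lt (by linarith) hcon.1⟩,
           ⟨le_max_right _ _, max_lt hcon.2 (by linarith)⟩⟩
        rw [hreal] at hx; exact hx
      rcases hcases with h | h
      · left; exact image_mono fun x hx => ⟨le_trans hac' hx.1, lt_of_lt_of_le hx.2 h⟩
      · right; exact image_mono fun x hx => ⟨le_trans h hx.1, by linarith [hx.2, hc'p]⟩
theorem complement_structure (I : ℕ → Set Circle1) (hI : ∀ n, IsArc (I n))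
    (hdisj : Pairwise (Function.onFun Disjoint I)) (s : Finset ℕ) :
    ∃ (k : ℕ) (J : Fin k → Set Circle1),
      (∀ i, IsArc (J i)) ∧ Pairwise (Function.onFun Disjoint J) ∧
      (⋃ i, J i) = (⋃ n ∈ s, I n)ᶜ ∧ (∀ m, m ∉ s → ∃ i, I m ⊆ J i) := by
  classical
  induction s using Finset.induction_on with
  | empty =>
    refine ⟨1, fun _ => univ, fun _ => isArc_univ,
      fun i j h => absurd (Subsingleton.elim i j) h, by simp [Set.iUnion_const],
      fun m _ => ⟨0, subset_univ _⟩⟩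
  | @insert n s hn ih =>
    obtain ⟨k, J, hJarc, hJdisj, hJunion, hJcont⟩ := ih
    obtain ⟨i₀, hi₀⟩ := hJcont n hn
    obtain ⟨A₁, A₂, hA₁, hA₂, hA12, hAeq, hAuniv⟩ := arc_split (J i₀) (I n) (hJarc i₀) (hI n) hi₀
    have hA₁sub : A₁ ⊆ J i₀ \ I n := hAeq ▸ subset_union_left
    have hA₂sub : A₂ ⊆ J i₀ \ I n := hAeq ▸ subset_union_right
    set J' : Fin (k + 1) → Set Circle1 := Fin.snoc (Function.update J i₀ A₁) A₂ with hJ'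
    have hJ'last : J' (Fin.last k) = A₂ := Fin.snoc_last _ _
    have hJ'cast : ∀ i : Fin k, J' (Fin.castSucc i) = Function.update J i₀ A₁ i :=
      fun i => Fin.snoc_castSucc _ _ i
    refine ⟨k + 1, J', ?_, ?_, ?_, ?_⟩
    · intro i
      refine Fin.lastCases ?_ ?_ i
      · rw [hJ'last]; exact hA₂
      · intro j; rw [hJ'cast]
        by_cases hj : j = i₀
        · subst hj; rw [Function.update_self]; exact hA₁
        · rw [Function.update_of_ne hj]; exact hJarc j
    · -- pairwise disjoint
      have key : ∀ i : Fin k, ∀ T, T ⊆ J i₀ → i ≠ i₀ → Disjoint T (J i) := by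
        intro i T hT hne
        exact (hJdisj (Ne.symm hne)).mono_left hT
      intro i j hne
      rcases Fin.eq_castSucc_or_eq_last i with ⟨i', rfl⟩ | rfl <;>
        rcases Fin.eq_castSucc_or_eq_last j with ⟨j', rfl⟩ | rfl
      · -- both castSucc
        have hij : i' ≠ j' := fun h => hne (by rw [h])
        show Disjoint (J' i'.castSucc) (J' j'.castSucc)
        rw [hJ'cast, hJ'cast]
        by_cases h1 : i' = i₀
        · subst h1
          rw [Function.update_self, Function.update_of_ne (Ne.symm hij)]
          exact key j' A₁ (hA₁sub.trans diff_subset) (Ne.symm hij)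
        · rw [Function.update_of_ne h1]
          by_cases h2 : j' = i₀
          · subst h2
            rw [Function.update_self]
            exact (key i' A₁ (hA₁sub.trans diff_subset) h1).symm
          · rw [Function.update_of_ne h2]
            exact hJdisj hij
      · show Disjoint (J' i'.castSucc) (J' (Fin.last k))
        rw [hJ'cast, hJ'last]
        by_cases h1 : i' = i₀
        · subst h1; rw [Function.update_self]; exact hA12
        · rw [Function.update_of_ne h1]
          exact (key i' A₂ (hA₂sub.trans diff_subset) h1).symm
      · show Disjoint (J' (Fin.last k)) (J' j'.castSucc)
        rw [hJ'cast, hJ'last]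
        by_cases h1 : j' = i₀
        · subst h1; rw [Function.update_self]; exact hA12.symm
        · rw [Function.update_of_ne h1]
          exact key j' A₂ (hA₂sub.trans diff_subset) h1
      · exact absurd rfl hne
    · -- union
      have key : ∀ i : Fin k, ∀ T, T ⊆ J i₀ → i ≠ i₀ → Disjoint T (J i) := by
        intro i T hT hne
        exact (hJdisj (Ne.symm hne)).mono_left hT
      have hstep : (⋃ i, J' i) = (⋃ i, J i) \ I n := by
        apply Set.Subset.antisymm
        · refine iUnion_subset fun i => ?_
          rcases Fin.eq_castSucc_or_eq_last i with ⟨i', rfl⟩ | rfl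
          · rw [hJ'cast]
            by_cases h1 : i' = i₀
            · rw [h1, Function.update_self]
              exact hA₁sub.trans (diff_subset_diff_left (subset_iUnion J i₀))
            · rw [Function.update_of_ne h1]
              refine subset_diff.mpr ⟨subset_iUnion J i', ?_⟩
              exact (key i' (I n) hi₀ h1).symm.symm |>.symm
          · rw [hJ'last]
            exact hA₂sub.trans (diff_subset_diff_left (subset_iUnion J i₀))
        · rintro x ⟨hx1, hx2⟩
          obtain ⟨i, hi⟩ := mem_iUnion.mp hx1
          by_cases h1 : i = i₀
          · rw [h1] at hi
            have : x ∈ A₁ ∪ A₂ := hAeq ▸ ⟨hi, hx2⟩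
            rcases this with h | h
            · exact mem_iUnion.mpr ⟨Fin.castSucc i, by
                rw [hJ'cast, h1, Function.update_self]; exact h⟩
            · exact mem_iUnion.mpr ⟨Fin.last k, by rw [hJ'last]; exact h⟩
          · exact mem_iUnion.mpr ⟨Fin.castSucc i, by
              rw [hJ'cast, Function.update_of_ne h1]; exact hi⟩
      rw [hstep, hJunion, Finset.set_biUnion_insert, Set.compl_union, Set.diff_eq,
        Set.inter_comm]
    · -- containment
      intro m hm
      rw [Finset.mem_insert] at hm
      push_neg at hm
      obtain ⟨i, hi⟩ := hJcont m hm.2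
      by_cases h1 : i = i₀
      · rw [h1] at hi
        rcases hAuniv (I m) (hI m) hi (hdisj hm.1) with h | h
        · exact ⟨Fin.castSucc i₀, by rw [hJ'cast, Function.update_self]; exact h⟩
        · exact ⟨Fin.last k, by rw [hJ'last]; exact h⟩
      · exact ⟨Fin.castSucc i, by rw [hJ'cast, Function.update_of_ne h1]; exact hi⟩
theorem IsArc.measurableSet {S : Set Circle1} (h : IsArc S) : MeasurableSet S := by
  obtain ⟨a, l, _, hl, rfl⟩ := h; exact arc_measurable a l hl

theorem IsArc.volume_eq {S : Set Circle1} (h : IsArc S) :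
    volume S = ENNReal.ofReal (arcLen S) ∧ 0 ≤ arcLen S ∧ arcLen S ≤ 1 := by
  obtain ⟨a, l, h0, hl, rfl⟩ := h
  have hv := arc_volume a l h0 hl
  have hlen : arcLen ((fun x : ℝ => (x : Circle1)) '' Set.Ico a (a + l)) = l := by
    rw [arcLen, hv, ENNReal.toReal_ofReal h0]
  rw [hlen, hv]; exact ⟨rfl, h0, hl⟩

/-- finite additivity of a premeasure over a finite disjoint family of arcs -/
theorem mu_add_finset (μ : Premeasure) {α : Type*} [DecidableEq α]
    (A : α → Set Circle1) (t : Finset α)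
    (harc : ∀ i ∈ t, IsArc (A i))
    (hdisj : ∀ i ∈ t, ∀ j ∈ t, i ≠ j → Disjoint (A i) (A j))
    (S : Set Circle1) (hS : ∀ i ∈ t, Disjoint S (A i)) :
    μ.m (S ∪ ⋃ i ∈ t, A i) = μ.m S + ∑ i ∈ t, μ.m (A i) := by
  classical
  induction t using Finset.induction_on with
  | empty => simp [μ.empty]
  | @insert a t ha ih =>
    have hre : S ∪ ⋃ i ∈ insert a t, A i = (S ∪ ⋃ i ∈ t, A i) ∪ A a := by
      rw [Finset.set_biUnion_insert, Set.union_comm (A a), Set.union_assoc]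
    rw [hre, μ.union _ _ ?_ (harc a (Finset.mem_insert_self a t)),
      ih (fun i hi => harc i (Finset.mem_insert_of_mem hi))
        (fun i hi j hj hij =>
          hdisj i (Finset.mem_insert_of_mem hi) j (Finset.mem_insert_of_mem hj) hij)
        (fun i hi => hS i (Finset.mem_insert_of_mem hi)),
      Finset.sum_insert ha]
    · ring
    · refine Disjoint.union_left (hS a (Finset.mem_insert_self a t)) ?_
      refine Set.disjoint_left.mpr fun x hx1 hx2 => ?_
      obtain ⟨i, hi, hxi⟩ := Set.mem_iUnion₂.mp hx1
      exact Set.disjoint_left.mp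
        (hdisj i (Finset.mem_insert_of_mem hi) a (Finset.mem_insert_self a t)
          (fun h => ha (h ▸ hi))) hxi hx2

/-- The `Λ`-singular part `μ_s(F) = −Σₙ μ(Iₙ)` of a `Λ`-bounded premeasure on a
`Λ`-Carleson set `F` (with complementary arcs `Iₙ`, `|I₁| ≥ |I₂| ≥ ⋯`) is a
convergent sum and `μ_s(F) ≤ 0`. -/
theorem stmt3 (Λ : ℝ → ℝ) (hΛ : Majorant Λ) (μ : Premeasure) (C : ℝ)
    (hμ : LambdaBounded Λ μ C)
    (F : Set Circle1) (hF : IsClosed F) (hFne : F.Nonempty) (hF0 : volume F = 0)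
    (I : ℕ → Set Circle1) (hI : ∀ n, IsArc (I n))
    (hdisj : Pairwise (Function.onFun Disjoint I))
    (hcomp : Fᶜ = ⋃ n, I n)
    (horder : Antitone fun n => arcLen (I n))
    (hent : Summable fun n => arcLen (I n) * Λ (arcLen (I n))) :
    Summable (fun n => μ.m (I n)) ∧ -(∑' n, μ.m (I n)) ≤ 0 := by
  classical
  set C' := max C 0 with hC'
  have hC'0 : (0:ℝ) ≤ C' := le_max_right _ _
  set e : ℕ → ℝ := fun n => arcLen (I n) * Λ (arcLen (I n)) with he
  have hxpos : ∀ S : Set Circle1, IsArc S → 0 ≤ arcLen S * Λ (arcLen S) := by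
    intro S hS
    rcases eq_or_lt_of_le hS.volume_eq.2.1 with h | h
    · rw [← h, zero_mul]
    · exact le_of_lt (mul_pos h (hΛ.1 _ ⟨h, hS.volume_eq.2.2⟩))
  have hμ' : ∀ S, IsArc S → μ.m S ≤ C' * (arcLen S * Λ (arcLen S)) := by
    intro S hS
    calc μ.m S ≤ C * arcLen S * Λ (arcLen S) := hμ S hS
    _ ≤ C' * (arcLen S * Λ (arcLen S)) := by
        rw [mul_assoc]
        exact mul_le_mul_of_nonneg_right (le_max_left C 0) (hxpos S hS)
  have he0 : ∀ n, 0 ≤ e n := fun n => hxpos _ (hI n)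
  set E := ∑' n, e n with hE
  have hpartial_le : ∀ N, ∑ n ∈ Finset.range N, e n ≤ E :=
    fun N => hent.sum_le_tsum _ (fun n _ => he0 n)
  have hmeasI : ∀ n, MeasurableSet (I n) := fun n => (hI n).measurableSet
  have hvol_union : volume (⋃ n, I n) = ∑' n, volume (I n) := measure_iUnion hdisj hmeasI
  have hvol_ne_top : (∑' n, volume (I n)) ≠ ⊤ := by
    rw [← hvol_union]; exact (measure_lt_top _ _).ne
  have hlen_summable : Summable (fun n => arcLen (I n)) := ENNReal.summable_toReal hvol_ne_top
  -- tail identity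
  have htail_eq : ∀ N, (∑' m, if N ≤ m then e m else 0) = E - ∑ n ∈ Finset.range N, e n := by
    intro N
    have hs1 : Summable (fun m => if N ≤ m then e m else 0) :=
      hent.of_nonneg_of_le (fun m => by by_cases h : N ≤ m <;> simp [h, he0 m])
        (fun m => by by_cases h : N ≤ m <;> simp [h, he0 m])
    have hs2 : Summable (fun m => if m < N then e m else 0) :=
      summable_of_ne_finset_zero (s := Finset.range N)
        (fun m hm => by simp only [Finset.mem_range, not_lt] at hm; simp [Nat.not_lt.mpr hm])
    have hEeq : E = (∑' m, if N ≤ m then e m else 0) + (∑' m, if m < N then e m else 0) := by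
      rw [hE, ← Summable.tsum_add hs1 hs2]
      apply tsum_congr
      intro m
      by_cases h : N ≤ m
      · simp [h, Nat.not_lt.mpr h]
      · simp [h, Nat.lt_of_not_le h]
    have h2 : (∑' m, if m < N then e m else 0) = ∑ n ∈ Finset.range N, e n := by
      rw [tsum_eq_sum (s := Finset.range N)
        (fun m hm => by simp only [Finset.mem_range, not_lt] at hm; simp [Nat.not_lt.mpr hm])]
      exact Finset.sum_congr rfl (fun m hm => by simp [Finset.mem_range.mp hm])
    rw [hEeq, h2]; ring
  -- the key bound
  have hkey : ∀ N, μ.m ((⋃ n ∈ Finset.range N, I n)ᶜ)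
      ≤ C' * (E - ∑ n ∈ Finset.range N, e n) := by
    intro N
    obtain ⟨k, J, hJarc, hJdisj, hJunion, hJcont⟩ :=
      complement_structure I hI hdisj (Finset.range N)
    have htail0 : 0 ≤ E - ∑ n ∈ Finset.range N, e n := sub_nonneg.mpr (hpartial_le N)
    rcases Nat.eq_zero_or_pos k with hk | hk
    · subst hk
      have hKe : (⋃ n ∈ Finset.range N, I n)ᶜ = ∅ := by
        rw [← hJunion]; exact iUnion_of_empty J
      rw [hKe, μ.empty]
      exact mul_nonneg hC'0 htail0
    haveI : Nonempty (Fin k) := ⟨⟨0, hk⟩⟩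
    set f : ℕ → Fin k := fun m =>
      if h : m ∈ Finset.range N then Classical.arbitrary _ else (hJcont m h).choose with hfdef
    have hf : ∀ m, N ≤ m → I m ⊆ J (f m) := by
      intro m hm
      have hm' : m ∉ Finset.range N := by simp [Finset.mem_range, Nat.not_lt.mpr hm]
      simp only [hfdef, dif_neg hm']
      exact (hJcont m hm').choose_spec
    have hJK : ∀ i, J i ⊆ (⋃ n ∈ Finset.range N, I n)ᶜ := by
      intro i
      rw [← hJunion]
      exact subset_iUnion J i
    -- covering of J i
    have hcover : ∀ i : Fin k,
        J i ⊆ F ∪ ⋃ m, (if N ≤ m ∧ i = f m then I m else ∅) := by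
      intro i x hx
      by_cases hxF : x ∈ F
      · exact Or.inl hxF
      · have hxI : x ∈ ⋃ m, I m := by rw [← hcomp]; exact hxF
        obtain ⟨m, hm⟩ := mem_iUnion.mp hxI
        have hNm : N ≤ m := by
          by_contra hcon
          push_neg at hcon
          exact (hJK i hx) (mem_biUnion (Finset.mem_range.mpr hcon) hm)
        have hfm : i = f m := by
          by_contra hne
          exact Set.disjoint_left.mp (hJdisj hne) hx (hf m hNm hm)
        exact Or.inr (mem_iUnion.mpr ⟨m, by rw [if_pos ⟨hNm, hfm⟩]; exact hm⟩)
    have hvolJ : ∀ i : Fin k,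
        volume (J i) ≤ ∑' m, (if N ≤ m ∧ i = f m then volume (I m) else 0) := by
      intro i
      calc volume (J i) ≤ volume (F ∪ ⋃ m, (if N ≤ m ∧ i = f m then I m else ∅)) :=
            measure_mono (hcover i)
      _ ≤ volume F + volume (⋃ m, (if N ≤ m ∧ i = f m then I m else ∅)) :=
            measure_union_le _ _
      _ = volume (⋃ m, (if N ≤ m ∧ i = f m then I m else ∅)) := by rw [hF0, zero_add]
      _ ≤ ∑' m, volume (if N ≤ m ∧ i = f m then I m else ∅) := measure_iUnion_le _
      _ = ∑' m, (if N ≤ m ∧ i = f m then volume (I m) else 0) := by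
            apply tsum_congr; intro m
            by_cases h : N ≤ m ∧ i = f m <;> simp [h]
    have hvI_ne_top : ∀ i : Fin k,
        (∑' m, (if N ≤ m ∧ i = f m then volume (I m) else 0)) ≠ ⊤ := by
      intro i
      refine ne_top_of_le_ne_top hvol_ne_top (ENNReal.tsum_le_tsum fun m => ?_)
      by_cases h : N ≤ m ∧ i = f m <;> simp [h]
    have hlenJ : ∀ i : Fin k,
        arcLen (J i) ≤ ∑' m, (if N ≤ m ∧ i = f m then arcLen (I m) else 0) := by
      intro i
      have h1 : arcLen (J i)
          ≤ ((∑' m, (if N ≤ m ∧ i = f m then volume (I m) else 0))).toReal :=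
        ENNReal.toReal_mono (hvI_ne_top i) (hvolJ i)
      refine h1.trans_eq ?_
      rw [ENNReal.tsum_toReal_eq (fun m => by
        by_cases h : N ≤ m ∧ i = f m <;> simp [h, (measure_lt_top volume (I m)).ne])]
      apply tsum_congr; intro m
      by_cases h : N ≤ m ∧ i = f m <;> simp [h, arcLen]
    -- entropy bound per piece
    have hw_summable : ∀ i : Fin k, Summable (fun m => if N ≤ m ∧ i = f m then e m else 0) :=
      fun i => hent.of_nonneg_of_le
        (fun m => by by_cases h : N ≤ m ∧ i = f m <;> simp [h, he0 m])
        (fun m => by by_cases h : N ≤ m ∧ i = f m <;> simp [h, he0 m])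
    have hlen'_summable : ∀ i : Fin k,
        Summable (fun m => if N ≤ m ∧ i = f m then arcLen (I m) else 0) :=
      fun i => hlen_summable.of_nonneg_of_le
        (fun m => by
          by_cases h : N ≤ m ∧ i = f m <;> simp [h, (hI m).volume_eq.2.1])
        (fun m => by
          by_cases h : N ≤ m ∧ i = f m <;> simp [h, (hI m).volume_eq.2.1])
    have hentJ : ∀ i : Fin k,
        arcLen (J i) * Λ (arcLen (J i)) ≤ ∑' m, (if N ≤ m ∧ i = f m then e m else 0) := by
      intro i
      rcases eq_or_lt_of_le (hJarc i).volume_eq.2.1 with h0 | h0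
      · rw [← h0, zero_mul]
        exact tsum_nonneg (fun m => by
          by_cases h : N ≤ m ∧ i = f m <;> simp [h, he0 m])
      · have hΛJ : 0 < Λ (arcLen (J i)) := hΛ.1 _ ⟨h0, (hJarc i).volume_eq.2.2⟩
        calc arcLen (J i) * Λ (arcLen (J i))
            ≤ (∑' m, (if N ≤ m ∧ i = f m then arcLen (I m) else 0)) * Λ (arcLen (J i)) :=
              mul_le_mul_of_nonneg_right (hlenJ i) hΛJ.le
        _ = ∑' m, (if N ≤ m ∧ i = f m then arcLen (I m) else 0) * Λ (arcLen (J i)) :=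
              tsum_mul_right.symm
        _ ≤ ∑' m, (if N ≤ m ∧ i = f m then e m else 0) := by
              refine Summable.tsum_le_tsum ?_ ((hlen'_summable i).mul_right _) (hw_summable i)
              intro m
              by_cases h : N ≤ m ∧ i = f m
              · rw [if_pos h, if_pos h]
                rcases eq_or_lt_of_le (hI m).volume_eq.2.1 with hm0 | hm0
                · rw [← hm0, zero_mul, he]
                  exact he0 m
                · have hsub : I m ⊆ J i := h.2 ▸ hf m h.1
                  have hle : arcLen (I m) ≤ arcLen (J i) :=
                    ENNReal.toReal_mono (measure_ne_top volume _) (measure_mono hsub)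
                  have := hΛ.2.1 ⟨hm0, (hI m).volume_eq.2.2⟩ ⟨h0, (hJarc i).volume_eq.2.2⟩ hle
                  exact mul_le_mul_of_nonneg_left this (hI m).volume_eq.2.1
              · rw [if_neg h, if_neg h, zero_mul]
    -- sum over pieces
    have hμK : μ.m ((⋃ n ∈ Finset.range N, I n)ᶜ) = ∑ i : Fin k, μ.m (J i) := by
      have h := mu_add_finset μ J Finset.univ (fun i _ => hJarc i)
        (fun i _ j _ hij => hJdisj hij) ∅ (fun i _ => empty_disjoint _)
      have huniv : ⋃ i ∈ (Finset.univ : Finset (Fin k)), J i = ⋃ i, J i := by simp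
      rw [huniv, Set.empty_union, μ.empty, zero_add] at h
      rw [← hJunion, h]
    rw [hμK]
    calc ∑ i : Fin k, μ.m (J i)
        ≤ ∑ i : Fin k, C' * (∑' m, (if N ≤ m ∧ i = f m then e m else 0)) :=
          Finset.sum_le_sum (fun i _ => (hμ' _ (hJarc i)).trans
            (mul_le_mul_of_nonneg_left (hentJ i) hC'0))
    _ = C' * ∑ i : Fin k, (∑' m, (if N ≤ m ∧ i = f m then e m else 0)) :=
          (Finset.mul_sum _ _ _).symm
    _ = C' * ∑' m, (∑ i : Fin k, if N ≤ m ∧ i = f m then e m else 0) := by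
          rw [Summable.tsum_finsetSum (fun i _ => hw_summable i)]
    _ = C' * ∑' m, (if N ≤ m then e m else 0) := by
          congr 1
          apply tsum_congr; intro m
          by_cases hNm : N ≤ m
          · simp only [hNm, true_and]
            simp [Finset.sum_ite_eq']
          · simp [hNm]
    _ = C' * (E - ∑ n ∈ Finset.range N, e n) := by rw [htail_eq N]
  -- additivity over initial segments
  have hzero : ∀ N, μ.m ((⋃ n ∈ Finset.range N, I n)ᶜ)
      + ∑ n ∈ Finset.range N, μ.m (I n) = 0 := by
    intro N
    have h := mu_add_finset μ I (Finset.range N) (fun i _ => hI i)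
      (fun i _ j _ hij => hdisj hij) ((⋃ n ∈ Finset.range N, I n)ᶜ)
      (fun i hi => disjoint_compl_left.mono_right (subset_biUnion_of_mem hi))
    rw [compl_union_self, μ.total] at h
    linarith [h]
  have hlower : ∀ N, -(C' * (E - ∑ n ∈ Finset.range N, e n))
      ≤ ∑ n ∈ Finset.range N, μ.m (I n) := by
    intro N
    have h1 := hkey N
    have h2 := hzero N
    linarith
  -- summability
  set g : ℕ → ℝ := fun n => C' * e n - μ.m (I n) with hg
  have hg0 : ∀ n, 0 ≤ g n := fun n => sub_nonneg.mpr (hμ' _ (hI n))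
  have hgsum : ∀ N, ∑ n ∈ Finset.range N, g n ≤ C' * E := by
    intro N
    have h3 : ∑ n ∈ Finset.range N, g n
        = C' * (∑ n ∈ Finset.range N, e n) - ∑ n ∈ Finset.range N, μ.m (I n) := by
      rw [Finset.sum_sub_distrib, Finset.mul_sum]
    have h4 := hlower N
    rw [h3]
    have h5 : C' * (E - ∑ n ∈ Finset.range N, e n) = C' * E - C' * ∑ n ∈ Finset.range N, e n := by ring
    linarith [h4, h5.symm ▸ h4]
  have hgsummable : Summable g := summable_of_sum_range_le hg0 hgsum
  have hsummable : Summable (fun n => μ.m (I n)) := by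
    have heq : (fun n => μ.m (I n)) = fun n => C' * e n - g n := by
      funext n; simp [hg]
    rw [heq]
    exact (hent.mul_left C').sub hgsummable
  refine ⟨hsummable, ?_⟩
  rw [neg_nonpos]
  have htends := hsummable.hasSum.tendsto_sum_nat
  have htends2 : Tendsto (fun N => -(C' * (E - ∑ n ∈ Finset.range N, e n))) atTop (𝓝 0) := by
    have hE' := hent.hasSum.tendsto_sum_nat
    have h6 : Tendsto (fun N => E - ∑ n ∈ Finset.range N, e n) atTop (𝓝 (E - E)) :=
      tendsto_const_nhds.sub hE'
    have h7 : Tendsto (fun N => -(C' * (E - ∑ n ∈ Finset.range N, e n))) atTop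
        (𝓝 (-(C' * (E - E)))) := (h6.const_mul C').neg
    simpa using h7
  exact le_of_tendsto_of_tendsto' htends2 htends hlower
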